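/- Let V be the 𝔽₇-vector space 𝔽₇[t,t₂]/(t⁷−1, t₂⁷−1) and let W be the quotient of V by the subspace spanned by the 21 elements t^a, t₂^a, and t^a·Σ_{j=1}^{7} t^j t₂^{7−j} for a = 0,…,6. Then the seven elements 0, 0, 2tt₂, 2tt₂²+2t²t₂, 2tt₂³+2t²t₂²+2t³t₂, 2tt₂⁴+2t²t₂³+2t³t₂²+2t⁴t₂, 2tt₂⁵+2t²t₂⁴+2t³t₂³+2t⁴t₂²+2t⁵t₂ have images in W spanning a subspace of dimension exactly 4. -/

import Mathlib

noncomputable section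
open MvPolynomial Finset

abbrev F7 := ZMod 7

/-- The group algebra `𝔽₇[t,t₂]/(t⁷−1, t₂⁷−1)` of `ℤ/7 × ℤ/7`. -/
abbrev V : Type :=
  MvPolynomial (Fin 2) F7 ⧸
    Ideal.span ({X 0 ^ 7 - 1, X 1 ^ 7 - 1} : Set (MvPolynomial (Fin 2) F7))

def t : V := Ideal.Quotient.mk _ (X 0)
def t₂ : V := Ideal.Quotient.mk _ (X 1)

/-- `Σ_{j=1}^{7} t^j t₂^{7−j}`. -/
def sigma : V := ∑ j ∈ range 7, t ^ (j + 1) * t₂ ^ (6 - j)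

/-- The subspace spanned by the 21 elements `t^a`, `t₂^a`, `t^a·Σ` for `a = 0,…,6`. -/
def U : Submodule F7 V :=
  Submodule.span F7 {x : V | ∃ a < 7, x = t ^ a ∨ x = t₂ ^ a ∨ x = t ^ a * sigma}

/-- The quotient `W = Q_{𝔽₇}` and the projection `π : V → W`. -/
abbrev W : Type := V ⧸ U

def π : V →ₗ[F7] W := U.mkQ

abbrev G := ZMod 7 × ZMod 7
abbrev A := AddMonoidAlgebra F7 G

def gen : Fin 2 → A := ![AddMonoidAlgebra.single (1,0) 1, AddMonoidAlgebra.single (0,1) 1]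

lemma aeval_vanish : ∀ a ∈ Ideal.span ({X 0 ^ 7 - 1, X 1 ^ 7 - 1} : Set (MvPolynomial (Fin 2) F7)),
    aeval gen a = 0 := by
  intro a ha
  refine (Ideal.span_le.mpr ?_ : _ ≤ RingHom.ker (aeval gen).toRingHom) ha
  rintro x (rfl | rfl) <;>
  · simp only [SetLike.mem_coe, RingHom.mem_ker, AlgHom.toRingHom_eq_coe, RingHom.coe_coe,
      map_sub, map_pow, aeval_X, map_one, gen, Matrix.cons_val_zero, Matrix.cons_val_one,
      Matrix.head_cons]
    rw [AddMonoidAlgebra.single_pow]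
    rw [sub_eq_zero, AddMonoidAlgebra.one_def]
    congr 1 <;> decide

def φ : V →ₐ[F7] A := Ideal.Quotient.liftₐ _ (aeval gen) aeval_vanish

lemma phi_t : φ t = AddMonoidAlgebra.single (1,0) 1 := by
  show (aeval gen) (X 0 : MvPolynomial (Fin 2) F7) = _
  simp [gen]

lemma phi_t2 : φ t₂ = AddMonoidAlgebra.single (0,1) 1 := by
  show (aeval gen) (X 1 : MvPolynomial (Fin 2) F7) = _
  simp [gen]

lemma phi_mono (a b : ℕ) : φ (t ^ a * t₂ ^ b) =
    AddMonoidAlgebra.single ((a : ZMod 7), (b : ZMod 7)) 1 := by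
  rw [map_mul, map_pow, map_pow, phi_t, phi_t2, AddMonoidAlgebra.single_pow,
    AddMonoidAlgebra.single_pow, AddMonoidAlgebra.single_mul_single]
  norm_num

-- coefficient functional
def coefAt (g : G) : V →ₗ[F7] F7 where
  toFun x := (φ x).coeff g
  map_add' x y := by rw [map_add]; exact Finsupp.add_apply _ _ _
  map_smul' c x := by rw [map_smul]; exact Finsupp.smul_apply _ _ _

lemma coefAt_mono (g : G) (a b : ℕ) :
    coefAt g (t ^ a * t₂ ^ b) = if ((a : ZMod 7), (b : ZMod 7)) = g then 1 else 0 := by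
  show (φ _).coeff g = _
  rw [phi_mono]
  exact Finsupp.single_apply

def f (k : ℕ) : V →ₗ[F7] F7 := coefAt ((1 : ZMod 7), (k : ZMod 7)) - coefAt ((k : ZMod 7) + 2, (6 : ZMod 7))

lemma f_mono (k a b : ℕ) : f k (t ^ a * t₂ ^ b) =
    (if ((a : ZMod 7), (b : ZMod 7)) = (1, (k : ZMod 7)) then 1 else 0)
      - (if ((a : ZMod 7), (b : ZMod 7)) = ((k : ZMod 7) + 2, 6) then 1 else 0) := by
  rw [f, LinearMap.sub_apply, coefAt_mono, coefAt_mono]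

lemma ht7 : (t : V) ^ 7 = 1 := by
  rw [t, ← map_pow, ← sub_eq_zero, ← map_one (Ideal.Quotient.mk _), ← map_sub,
    Ideal.Quotient.eq_zero_iff_mem]
  exact Ideal.subset_span (by simp)


lemma f_sigma (k a : ℕ) : f k (t ^ a * sigma) =
    ∑ j ∈ range 7, f k (t ^ (a + (j + 1)) * t₂ ^ (6 - j)) := by
  rw [sigma, Finset.mul_sum, map_sum]
  refine Finset.sum_congr rfl fun j _ => ?_
  rw [← mul_assoc, ← pow_add]

lemma f_U {k : ℕ} (hk : k ∈ Finset.Icc 1 4) : U ≤ LinearMap.ker (f k) := by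
  rw [U, Submodule.span_le]
  rintro x ⟨a, ha, rfl | rfl | rfl⟩ <;>
    simp only [SetLike.mem_coe, LinearMap.mem_ker] <;>
    [ (rw [show (t:V)^a = t^a * t₂^0 from by rw [pow_zero, mul_one]]);
      (rw [show (t₂:V)^a = t^0 * t₂^a from by rw [pow_zero, one_mul]]);
      skip ] <;>
    simp only [f_sigma, f_mono] <;>
    (fin_cases hk <;> interval_cases a <;> decide)

lemma smul2 (x : V) : (2 : F7) • x = 2 * x := by
  rw [two_smul, two_mul]

lemma v5_mem : (2 * t * t₂ ^ 5 + 2 * t ^ 2 * t₂ ^ 4 + 2 * t ^ 3 * t₂ ^ 3 + 2 * t ^ 4 * t₂ ^ 2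
    + 2 * t ^ 5 * t₂ : V) ∈ U := by
  have key : (2 * t * t₂ ^ 5 + 2 * t ^ 2 * t₂ ^ 4 + 2 * t ^ 3 * t₂ ^ 3 + 2 * t ^ 4 * t₂ ^ 2
      + 2 * t ^ 5 * t₂ : V)
      = (2 : F7) • (t ^ 6 * sigma) - (2 : F7) • ((t:V) ^ 6) - (2 : F7) • ((t₂:V) ^ 6) := by
    rw [smul2, smul2, smul2]
    simp only [sigma, Finset.sum_range_succ, Finset.sum_range_zero]
    norm_num
    linear_combination (-2 * (t₂^6 + t*t₂^5 + t^2*t₂^4 + t^3*t₂^3 + t^4*t₂^2 + t^5*t₂ + t^6)) * ht7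
  rw [key]
  have h1 : (t:V) ^ 6 * sigma ∈ U :=
    Submodule.subset_span ⟨6, by norm_num, Or.inr (Or.inr rfl)⟩
  have h2 : (t:V) ^ 6 ∈ U := Submodule.subset_span ⟨6, by norm_num, Or.inl rfl⟩
  have h3 : (t₂:V) ^ 6 ∈ U := Submodule.subset_span ⟨6, by norm_num, Or.inr (Or.inl rfl)⟩
  exact sub_mem (sub_mem (U.smul_mem _ h1) (U.smul_mem _ h2)) (U.smul_mem _ h3)

set_option maxHeartbeats 2000000 in
set_option synthInstance.maxHeartbeats 1000000 in
theorem stmt15 :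
    Module.finrank F7 (Submodule.span F7
      ({π 0, π 0, π (2 * t * t₂),
        π (2 * t * t₂ ^ 2 + 2 * t ^ 2 * t₂),
        π (2 * t * t₂ ^ 3 + 2 * t ^ 2 * t₂ ^ 2 + 2 * t ^ 3 * t₂),
        π (2 * t * t₂ ^ 4 + 2 * t ^ 2 * t₂ ^ 3 + 2 * t ^ 3 * t₂ ^ 2 + 2 * t ^ 4 * t₂),
        π (2 * t * t₂ ^ 5 + 2 * t ^ 2 * t₂ ^ 4 + 2 * t ^ 3 * t₂ ^ 3 + 2 * t ^ 4 * t₂ ^ 2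
            + 2 * t ^ 5 * t₂)} : Set W)) = 4 := by
  have e1 : (2 * t * t₂ : V) = t ^ 1 * t₂ ^ 1 + t ^ 1 * t₂ ^ 1 := by ring
  have e2 : (2 * t * t₂ ^ 2 + 2 * t ^ 2 * t₂ : V)
      = (t ^ 1 * t₂ ^ 2 + t ^ 2 * t₂ ^ 1) + (t ^ 1 * t₂ ^ 2 + t ^ 2 * t₂ ^ 1) := by ring
  have e3 : (2 * t * t₂ ^ 3 + 2 * t ^ 2 * t₂ ^ 2 + 2 * t ^ 3 * t₂ : V)
      = (t ^ 1 * t₂ ^ 3 + t ^ 2 * t₂ ^ 2 + t ^ 3 * t₂ ^ 1)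
        + (t ^ 1 * t₂ ^ 3 + t ^ 2 * t₂ ^ 2 + t ^ 3 * t₂ ^ 1) := by ring
  have e4 : (2 * t * t₂ ^ 4 + 2 * t ^ 2 * t₂ ^ 3 + 2 * t ^ 3 * t₂ ^ 2 + 2 * t ^ 4 * t₂ : V)
      = (t ^ 1 * t₂ ^ 4 + t ^ 2 * t₂ ^ 3 + t ^ 3 * t₂ ^ 2 + t ^ 4 * t₂ ^ 1)
        + (t ^ 1 * t₂ ^ 4 + t ^ 2 * t₂ ^ 3 + t ^ 3 * t₂ ^ 2 + t ^ 4 * t₂ ^ 1) := by ring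
  have hz : π (0 : V) = 0 := map_zero π
  have h5 : π (2 * t * t₂ ^ 5 + 2 * t ^ 2 * t₂ ^ 4 + 2 * t ^ 3 * t₂ ^ 3 + 2 * t ^ 4 * t₂ ^ 2
      + 2 * t ^ 5 * t₂) = 0 := by
    rw [π, Submodule.mkQ_apply, Submodule.Quotient.mk_eq_zero]; exact v5_mem
  have hindep : LinearIndependent F7
      ![π (2 * t * t₂), π (2 * t * t₂ ^ 2 + 2 * t ^ 2 * t₂),
        π (2 * t * t₂ ^ 3 + 2 * t ^ 2 * t₂ ^ 2 + 2 * t ^ 3 * t₂),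
        π (2 * t * t₂ ^ 4 + 2 * t ^ 2 * t₂ ^ 3 + 2 * t ^ 3 * t₂ ^ 2 + 2 * t ^ 4 * t₂)] := by
    haveI : Fact (Nat.Prime 7) := ⟨by norm_num⟩
    rw [Fintype.linearIndependent_iff]
    intro g hg
    rw [Fin.sum_univ_four] at hg
    simp only [Matrix.cons_val_zero, Matrix.cons_val_one, Matrix.head_cons,
      Matrix.cons_val_two, Matrix.tail_cons, Matrix.cons_val_three] at hg
    rw [← map_smul, ← map_smul, ← map_smul, ← map_smul, ← map_add, ← map_add, ← map_add,
      π, Submodule.mkQ_apply, Submodule.Quotient.mk_eq_zero] at hg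
    have c1 := f_U (show (1:ℕ) ∈ Finset.Icc 1 4 by decide) hg
    have c2 := f_U (show (2:ℕ) ∈ Finset.Icc 1 4 by decide) hg
    have c3 := f_U (show (3:ℕ) ∈ Finset.Icc 1 4 by decide) hg
    have c4 := f_U (show (4:ℕ) ∈ Finset.Icc 1 4 by decide) hg
    rw [LinearMap.mem_ker] at c1 c2 c3 c4
    simp only [e1, e2, e3, e4, map_add, map_smul, f_mono, smul_eq_mul] at c1 c2 c3 c4
    simp (config := { decide := true }) at c1 c2 c3 c4
    intro i
    fin_cases i
    · exact c1
    · exact c2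
    · exact c3
    · exact c4
  have hset : ({π 0, π 0, π (2 * t * t₂),
        π (2 * t * t₂ ^ 2 + 2 * t ^ 2 * t₂),
        π (2 * t * t₂ ^ 3 + 2 * t ^ 2 * t₂ ^ 2 + 2 * t ^ 3 * t₂),
        π (2 * t * t₂ ^ 4 + 2 * t ^ 2 * t₂ ^ 3 + 2 * t ^ 3 * t₂ ^ 2 + 2 * t ^ 4 * t₂),
        π (2 * t * t₂ ^ 5 + 2 * t ^ 2 * t₂ ^ 4 + 2 * t ^ 3 * t₂ ^ 3 + 2 * t ^ 4 * t₂ ^ 2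
            + 2 * t ^ 5 * t₂)} : Set W)
      = insert 0 {π (2 * t * t₂), π (2 * t * t₂ ^ 2 + 2 * t ^ 2 * t₂),
        π (2 * t * t₂ ^ 3 + 2 * t ^ 2 * t₂ ^ 2 + 2 * t ^ 3 * t₂),
        π (2 * t * t₂ ^ 4 + 2 * t ^ 2 * t₂ ^ 3 + 2 * t ^ 3 * t₂ ^ 2 + 2 * t ^ 4 * t₂)} := by
    rw [hz, h5]
    ext x
    simp only [Set.mem_insert_iff, Set.mem_singleton_iff]
    tauto
  rw [hset, Submodule.span_insert_zero]
  have hrange : ({π (2 * t * t₂), π (2 * t * t₂ ^ 2 + 2 * t ^ 2 * t₂),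
        π (2 * t * t₂ ^ 3 + 2 * t ^ 2 * t₂ ^ 2 + 2 * t ^ 3 * t₂),
        π (2 * t * t₂ ^ 4 + 2 * t ^ 2 * t₂ ^ 3 + 2 * t ^ 3 * t₂ ^ 2 + 2 * t ^ 4 * t₂)} : Set W)
      = Set.range ![π (2 * t * t₂), π (2 * t * t₂ ^ 2 + 2 * t ^ 2 * t₂),
        π (2 * t * t₂ ^ 3 + 2 * t ^ 2 * t₂ ^ 2 + 2 * t ^ 3 * t₂),
        π (2 * t * t₂ ^ 4 + 2 * t ^ 2 * t₂ ^ 3 + 2 * t ^ 3 * t₂ ^ 2 + 2 * t ^ 4 * t₂)] := by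
    ext x
    simp only [Set.mem_insert_iff, Set.mem_singleton_iff, Set.mem_range]
    constructor
    · rintro (rfl | rfl | rfl | rfl)
      exacts [⟨0, rfl⟩, ⟨1, rfl⟩, ⟨2, rfl⟩, ⟨3, rfl⟩]
    · rintro ⟨i, rfl⟩
      fin_cases i
      exacts [Or.inl rfl, Or.inr (Or.inl rfl), Or.inr (Or.inr (Or.inl rfl)),
        Or.inr (Or.inr (Or.inr rfl))]
  haveI : Nontrivial F7 := ⟨0, 1, by decide⟩
  rw [hrange, finrank_span_eq_card hindep]
  simp
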